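/- arXiv:1511.01781 — 2 statements merged into one kernel-verified Lean document; each statement's English description precedes it below -/
import Mathlib

section
/- Let A,B,C,D,E ∈ ℂ with A ≠ 0 and AB − 2AC + DE = 0, and let α, β ∈ ℂ be nonzero. Then: (a) F_{A,B,C,D,E}(−αz, α⁻¹w, z, w) = 0 for all z,w ∈ ℂ if and only if Aα⁴ + Dα² + A = 0; and (b) F_{A,B,C,D,E}(−βw, β⁻¹z, z, w) = 0 for all z,w ∈ ℂ if and only if Aβ⁴ + Eβ² + A = 0. Equivalently, the line {x + αz = y − α⁻¹w = 0} (resp. {x + βw = y − β⁻¹z = 0}) on the quadric Q₆ = {xy + zw = 0} lies on the surface X_{A,B,C,D,E} iff α (resp. β) is a root of At⁴ + Dt² + A (resp. At⁴ + Et² + A). -/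
/-- The quartic `F_{A,B,C,D,E}(x,y,z,w) = A(x⁴+y⁴+z⁴+w⁴) + Bxyzw + C(x²y²+z²w²)
+ D(x²z²+y²w²) + E(x²w²+y²z²)`. -/
def quarticF (A B C D E x y z w : ℂ) : ℂ :=
  A * (x ^ 4 + y ^ 4 + z ^ 4 + w ^ 4) + B * (x * y * z * w)
    + C * (x ^ 2 * y ^ 2 + z ^ 2 * w ^ 2) + D * (x ^ 2 * z ^ 2 + y ^ 2 * w ^ 2)
    + E * (x ^ 2 * w ^ 2 + y ^ 2 * z ^ 2)

/-- Let `A ≠ 0`, `AB − 2AC + DE = 0` and `α, β ≠ 0`. Then the line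
`{x + αz = y − α⁻¹w = 0}` on the quadric `Q₆ = {xy + zw = 0}` lies on the surface
`X_{A,B,C,D,E}` iff `Aα⁴ + Dα² + A = 0`, and the line `{x + βw = y − β⁻¹z = 0}`
lies on `X_{A,B,C,D,E}` iff `Aβ⁴ + Eβ² + A = 0`. -/
theorem line_on_quartic_iff (A B C D E α β : ℂ) (hA : A ≠ 0)
    (h : A * B - 2 * A * C + D * E = 0) (hα : α ≠ 0) (hβ : β ≠ 0) :
    ((∀ z w : ℂ, quarticF A B C D E (-(α * z)) (α⁻¹ * w) z w = 0) ↔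
        A * α ^ 4 + D * α ^ 2 + A = 0) ∧
      ((∀ z w : ℂ, quarticF A B C D E (-(β * w)) (β⁻¹ * z) z w = 0) ↔
        A * β ^ 4 + E * β ^ 2 + A = 0) := by
  have hα2 : (α:ℂ)^2 ≠ 0 := pow_ne_zero 2 hα
  have hβ2 : (β:ℂ)^2 ≠ 0 := pow_ne_zero 2 hβ
  have huα : α * α⁻¹ = 1 := mul_inv_cancel₀ hα
  have huβ : β * β⁻¹ = 1 := mul_inv_cancel₀ hβ
  constructor
  · constructor
    · intro hF
      have h1 := hF 1 0
      simp only [quarticF] at h1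
      linear_combination h1
    · intro hP z w
      have key : A * α ^ 4 * quarticF A B C D E (-(α * z)) (α⁻¹ * w) z w = 0 := by
        simp only [quarticF]
        linear_combination (A * α ^ 4 * z ^ 4 + A * w ^ 4 + E * α ^ 2 * z ^ 2 * w ^ 2) * hP
          - α ^ 4 * z ^ 2 * w ^ 2 * h
          + (A ^ 2 * w ^ 4 * (α ^ 2 * α⁻¹ ^ 2 + 1) * (α * α⁻¹ + 1)
            + A * D * α ^ 2 * w ^ 4 * (α * α⁻¹ + 1)
            + A * E * α ^ 2 * z ^ 2 * w ^ 2 * (α * α⁻¹ + 1)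
            + A * C * α ^ 4 * z ^ 2 * w ^ 2 * (α * α⁻¹ + 1)
            - A * B * α ^ 4 * z ^ 2 * w ^ 2) * huα
      rcases mul_eq_zero.mp key with h' | h'
      · exact absurd h' (mul_ne_zero hA (pow_ne_zero 4 hα))
      · exact h'
  · constructor
    · intro hF
      have h1 := hF 1 0
      simp only [quarticF] at h1
      linear_combination β ^ 4 * h1
        - (A * (β ^ 2 * β⁻¹ ^ 2 + 1) * (β * β⁻¹ + 1) + E * β ^ 2 * (β * β⁻¹ + 1)) * huβ
    · intro hP z w
      have key : A * β ^ 4 * quarticF A B C D E (-(β * w)) (β⁻¹ * z) z w = 0 := by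
        simp only [quarticF]
        linear_combination (A * β ^ 4 * w ^ 4 + A * z ^ 4 + D * β ^ 2 * z ^ 2 * w ^ 2) * hP
          - β ^ 4 * z ^ 2 * w ^ 2 * h
          + (A ^ 2 * z ^ 4 * (β ^ 2 * β⁻¹ ^ 2 + 1) * (β * β⁻¹ + 1)
            + A * E * β ^ 2 * z ^ 4 * (β * β⁻¹ + 1)
            + A * D * β ^ 2 * z ^ 2 * w ^ 2 * (β * β⁻¹ + 1)
            + A * C * β ^ 4 * z ^ 2 * w ^ 2 * (β * β⁻¹ + 1)
            - A * B * β ^ 4 * z ^ 2 * w ^ 2) * huβ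
      rcases mul_eq_zero.mp key with h' | h'
      · exact absurd h' (mul_ne_zero hA (pow_ne_zero 4 hβ))
      · exact h'
end

section
/- Let A,B,C,D,E ∈ ℂ with A ≠ 0, AB − 2AC + DE = 0, D² ≠ 4A² and E² ≠ 4A². Let 𝒜 = {W(α) : α ∈ ℂ, Aα⁴ + Dα² + A = 0} and ℬ = {W'(β) : β ∈ ℂ, Aβ⁴ + Eβ² + A = 0}, each a set of four 2-dimensional subspaces of ℂ⁴, where W(α) = {x + αz = y − α⁻¹w = 0} and W'(β) = {x + βw = y − β⁻¹z = 0}. Let Γ be the group of projective transformations of ℙ³(ℂ) generated by [x:y:z:w] ↦ [y:x:w:z], [z:w:x:y], [x:y:−z:−w], [x:−y:z:−w]. Then Γ preserves the sets 𝒜 and ℬ, and for any L₁, L₂ ∈ 𝒜 and M₁, M₂ ∈ ℬ there exists a unique γ ∈ Γ with γ(L₁) = L₂ and γ(M₁) = M₂; i.e., Γ acts simply transitively on 𝒜 × ℬ. -/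
open Matrix

/-- The subgroup of nonzero scalar matrices in `GLₙ(ℂ)`. -/
noncomputable def scalarUnits (n : ℕ) : Subgroup (GL (Fin n) ℂ) :=
  (Units.map (algebraMap ℂ (Matrix (Fin n) (Fin n) ℂ)).toMonoidHom).range

instance scalarUnits_normal (n : ℕ) : (scalarUnits n).Normal := by
  constructor
  rintro s hs g
  obtain ⟨c, rfl⟩ := hs
  refine ⟨c, Units.ext ?_⟩
  simp only [Units.coe_map, Units.val_mul, MonoidHom.coe_coe, RingHom.toMonoidHom_eq_coe]
  rw [← Algebra.commutes, mul_assoc, Units.mul_inv, mul_one]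

/-- `PGLₙ(ℂ)`, the quotient of `GLₙ(ℂ)` by its subgroup of nonzero scalar matrices;
its elements are the projective transformations of `ℙⁿ⁻¹(ℂ)`. -/
noncomputable def PGL (n : ℕ) : Type :=
  GL (Fin n) ℂ ⧸ scalarUnits n

noncomputable instance (n : ℕ) : Group (PGL n) :=
  inferInstanceAs (Group (GL (Fin n) ℂ ⧸ scalarUnits n))

/-- The natural projection `GLₙ(ℂ) → PGLₙ(ℂ)`. -/
noncomputable def toPGL (n : ℕ) : GL (Fin n) ℂ →* PGL n :=
  QuotientGroup.mk' (scalarUnits n)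

/-- The matrix of `(x,y,z,w) ↦ (y,x,w,z)`. -/
noncomputable def g₁ : GL (Fin 4) ℂ :=
  Matrix.GeneralLinearGroup.mkOfDetNeZero !![0,1,0,0; 1,0,0,0; 0,0,0,1; 0,0,1,0]
    (by rw [Matrix.det_succ_row_zero]
        simp [Fin.sum_univ_four, Matrix.det_fin_three, Matrix.submatrix, Fin.succAbove])

/-- The matrix of `(x,y,z,w) ↦ (z,w,x,y)`. -/
noncomputable def g₂ : GL (Fin 4) ℂ :=
  Matrix.GeneralLinearGroup.mkOfDetNeZero !![0,0,1,0; 0,0,0,1; 1,0,0,0; 0,1,0,0]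
    (by rw [Matrix.det_succ_row_zero]
        simp [Fin.sum_univ_four, Matrix.det_fin_three, Matrix.submatrix, Fin.succAbove])

/-- The matrix of `(x,y,z,w) ↦ (x,y,−z,−w)`. -/
noncomputable def g₃ : GL (Fin 4) ℂ :=
  Matrix.GeneralLinearGroup.mkOfDetNeZero !![1,0,0,0; 0,1,0,0; 0,0,-1,0; 0,0,0,-1]
    (by rw [Matrix.det_succ_row_zero]
        simp [Fin.sum_univ_four, Matrix.det_fin_three, Matrix.submatrix, Fin.succAbove])

/-- The matrix of `(x,y,z,w) ↦ (x,−y,z,−w)`. -/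
noncomputable def g₄ : GL (Fin 4) ℂ :=
  Matrix.GeneralLinearGroup.mkOfDetNeZero !![1,0,0,0; 0,-1,0,0; 0,0,1,0; 0,0,0,-1]
    (by rw [Matrix.det_succ_row_zero]
        simp [Fin.sum_univ_four, Matrix.det_fin_three, Matrix.submatrix, Fin.succAbove])

/-- The group `Γ` of projective transformations of `ℙ³(ℂ)` generated by
`[x:y:z:w] ↦ [y:x:w:z], [z:w:x:y], [x:y:−z:−w], [x:−y:z:−w]`. -/
noncomputable def Γ : Subgroup (PGL 4) :=
  Subgroup.closure {toPGL 4 g₁, toPGL 4 g₂, toPGL 4 g₃, toPGL 4 g₄}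

/-- A projective transformation `γ` maps the line (2-dimensional subspace) `L` to `L'`
if some (equivalently, any) linear representative of `γ` maps `L` onto `L'`. -/
noncomputable def mapsLine (γ : PGL 4) (L L' : Submodule ℂ (Fin 4 → ℂ)) : Prop :=
  ∃ g : GL (Fin 4) ℂ, toPGL 4 g = γ ∧
    Submodule.map (Matrix.toLin' (g : Matrix (Fin 4) (Fin 4) ℂ)) L = L'

/-- The subspace `W(α) = {(x,y,z,w) ∈ ℂ⁴ : x + αz = 0, y − α⁻¹w = 0}`. -/
noncomputable def lineW (α : ℂ) : Submodule ℂ (Fin 4 → ℂ) where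
  carrier := {p | p 0 + α * p 2 = 0 ∧ p 1 - α⁻¹ * p 3 = 0}
  add_mem' := by
    rintro a b ⟨ha1, ha2⟩ ⟨hb1, hb2⟩
    refine ⟨?_, ?_⟩ <;> simp only [Pi.add_apply]
    · linear_combination ha1 + hb1
    · linear_combination ha2 + hb2
  zero_mem' := by simp
  smul_mem' := by
    rintro c p ⟨h1, h2⟩
    refine ⟨?_, ?_⟩ <;> simp only [Pi.smul_apply, smul_eq_mul]
    · linear_combination c * h1
    · linear_combination c * h2

/-- The subspace `W'(β) = {(x,y,z,w) ∈ ℂ⁴ : x + βw = 0, y − β⁻¹z = 0}`. -/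
noncomputable def lineW' (β : ℂ) : Submodule ℂ (Fin 4 → ℂ) where
  carrier := {p | p 0 + β * p 3 = 0 ∧ p 1 - β⁻¹ * p 2 = 0}
  add_mem' := by
    rintro a b ⟨ha1, ha2⟩ ⟨hb1, hb2⟩
    refine ⟨?_, ?_⟩ <;> simp only [Pi.add_apply]
    · linear_combination ha1 + hb1
    · linear_combination ha2 + hb2
  zero_mem' := by simp
  smul_mem' := by
    rintro c p ⟨h1, h2⟩
    refine ⟨?_, ?_⟩ <;> simp only [Pi.smul_apply, smul_eq_mul]
    · linear_combination c * h1
    · linear_combination c * h2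

/-- The set `𝒜 = {W(α) : Aα⁴ + Dα² + A = 0}` of one ruling of lines. -/
noncomputable def linesA (A D : ℂ) : Set (Submodule ℂ (Fin 4 → ℂ)) :=
  {W | ∃ α : ℂ, A * α ^ 4 + D * α ^ 2 + A = 0 ∧ W = lineW α}

/-- The set `ℬ = {W'(β) : Aβ⁴ + Eβ² + A = 0}` of the other ruling of lines. -/
noncomputable def linesB (A E : ℂ) : Set (Submodule ℂ (Fin 4 → ℂ)) :=
  {W | ∃ β : ℂ, A * β ^ 4 + E * β ^ 2 + A = 0 ∧ W = lineW' β}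
namespace GammaAux

abbrev Mat := Matrix (Fin 4) (Fin 4) ℂ

lemma cg₁ : (g₁ : Mat) = !![0,1,0,0; 1,0,0,0; 0,0,0,1; 0,0,1,0] := rfl
lemma cg₂ : (g₂ : Mat) = !![0,0,1,0; 0,0,0,1; 1,0,0,0; 0,1,0,0] := rfl
lemma cg₃ : (g₃ : Mat) = !![1,0,0,0; 0,1,0,0; 0,0,-1,0; 0,0,0,-1] := rfl
lemma cg₄ : (g₄ : Mat) = !![1,0,0,0; 0,-1,0,0; 0,0,1,0; 0,0,0,-1] := rfl

section GLfacts

lemma g₁_sq : g₁ * g₁ = 1 := by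
  ext i j
  fin_cases i <;> fin_cases j <;>
    simp [Units.val_mul, cg₁, Matrix.mul_apply, Fin.sum_univ_four, Matrix.one_apply,
      Matrix.vecHead, Matrix.vecTail]

lemma g₂_sq : g₂ * g₂ = 1 := by
  ext i j
  fin_cases i <;> fin_cases j <;>
    simp [Units.val_mul, cg₂, Matrix.mul_apply, Fin.sum_univ_four, Matrix.one_apply,
      Matrix.vecHead, Matrix.vecTail]

lemma g₃_sq : g₃ * g₃ = 1 := by
  ext i j
  fin_cases i <;> fin_cases j <;>
    simp [Units.val_mul, cg₃, Matrix.mul_apply, Fin.sum_univ_four, Matrix.one_apply,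
      Matrix.vecHead, Matrix.vecTail]

lemma g₄_sq : g₄ * g₄ = 1 := by
  ext i j
  fin_cases i <;> fin_cases j <;>
    simp [Units.val_mul, cg₄, Matrix.mul_apply, Fin.sum_univ_four, Matrix.one_apply,
      Matrix.vecHead, Matrix.vecTail]

lemma comm12 : g₁ * g₂ = g₂ * g₁ := by
  ext i j
  fin_cases i <;> fin_cases j <;>
    simp [Units.val_mul, cg₁, cg₂, Matrix.mul_apply, Fin.sum_univ_four,
      Matrix.vecHead, Matrix.vecTail]

lemma comm13 : g₁ * g₃ = g₃ * g₁ := by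
  ext i j
  fin_cases i <;> fin_cases j <;>
    simp [Units.val_mul, cg₁, cg₃, Matrix.mul_apply, Fin.sum_univ_four,
      Matrix.vecHead, Matrix.vecTail]

lemma comm24 : g₂ * g₄ = g₄ * g₂ := by
  ext i j
  fin_cases i <;> fin_cases j <;>
    simp [Units.val_mul, cg₂, cg₄, Matrix.mul_apply, Fin.sum_univ_four,
      Matrix.vecHead, Matrix.vecTail]

lemma comm34 : g₃ * g₄ = g₄ * g₃ := by
  ext i j
  fin_cases i <;> fin_cases j <;>
    simp [Units.val_mul, cg₃, cg₄, Matrix.mul_apply, Fin.sum_univ_four,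
      Matrix.vecHead, Matrix.vecTail]

/-- The scalar unit `-1`. -/
noncomputable def sU : GL (Fin 4) ℂ :=
  Units.map (algebraMap ℂ Mat).toMonoidHom (-1 : ℂˣ)

lemma sU_mem : sU ∈ scalarUnits 4 := ⟨-1, rfl⟩

lemma sU_val : (sU : Mat) = -1 := by
  simp [sU, Units.coe_map]

lemma pcomm14 : toPGL 4 (g₁ * g₄) = toPGL 4 (g₄ * g₁) := by
  apply (QuotientGroup.mk'_eq_mk' (scalarUnits 4)).mpr
  refine ⟨sU, sU_mem, ?_⟩
  ext i j
  have : ((g₁ * g₄ * sU : GL (Fin 4) ℂ) : Mat) = ((g₁ : Mat) * (g₄ : Mat)) * (-1) := by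
    rw [Units.val_mul, Units.val_mul, sU_val]
  rw [this, Units.val_mul]
  fin_cases i <;> fin_cases j <;>
    simp [cg₁, cg₄, Matrix.mul_apply, Fin.sum_univ_four, Matrix.vecHead, Matrix.vecTail]

lemma pcomm23 : toPGL 4 (g₂ * g₃) = toPGL 4 (g₃ * g₂) := by
  apply (QuotientGroup.mk'_eq_mk' (scalarUnits 4)).mpr
  refine ⟨sU, sU_mem, ?_⟩
  ext i j
  have : ((g₂ * g₃ * sU : GL (Fin 4) ℂ) : Mat) = ((g₂ : Mat) * (g₃ : Mat)) * (-1) := by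
    rw [Units.val_mul, Units.val_mul, sU_val]
  rw [this, Units.val_mul]
  fin_cases i <;> fin_cases j <;>
    simp [cg₂, cg₃, Matrix.mul_apply, Fin.sum_univ_four, Matrix.vecHead, Matrix.vecTail]

end GLfacts


section GroupStructure

/-- Optional factor at the `GL` level. -/
noncomputable def eB (b : Bool) (g : GL (Fin 4) ℂ) : GL (Fin 4) ℂ := if b then g else 1

/-- The sixteen candidate elements, at the `GL` level. -/
noncomputable def Fm (a b c d : Bool) : GL (Fin 4) ℂ :=
  eB a g₁ * eB b g₂ * eB c g₃ * eB d g₄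

/-- The sixteen candidate elements, at the `PGL` level. -/
noncomputable def fP (a b c d : Bool) : PGL 4 := toPGL 4 (Fm a b c d)

/-- Optional factor at the `PGL` level. -/
noncomputable def eP (b : Bool) (x : PGL 4) : PGL 4 := if b then x else 1

lemma toPGL_eB (b : Bool) (g : GL (Fin 4) ℂ) :
    toPGL 4 (eB b g) = eP b (toPGL 4 g) := by
  cases b <;> simp [eB, eP]

lemma fP_eq (a b c d : Bool) :
    fP a b c d = eP a (toPGL 4 g₁) * eP b (toPGL 4 g₂) * eP c (toPGL 4 g₃) *
      eP d (toPGL 4 g₄) := by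
  simp only [fP, Fm, MonoidHom.map_mul, toPGL_eB]

lemma px_comm12 : Commute (toPGL 4 g₁) (toPGL 4 g₂) := by
  show _ * _ = _ * _
  rw [← MonoidHom.map_mul, ← MonoidHom.map_mul, comm12]

lemma px_comm13 : Commute (toPGL 4 g₁) (toPGL 4 g₃) := by
  show _ * _ = _ * _
  rw [← MonoidHom.map_mul, ← MonoidHom.map_mul, comm13]

lemma px_comm14 : Commute (toPGL 4 g₁) (toPGL 4 g₄) := by
  show _ * _ = _ * _
  rw [← MonoidHom.map_mul, ← MonoidHom.map_mul, pcomm14]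

lemma px_comm23 : Commute (toPGL 4 g₂) (toPGL 4 g₃) := by
  show _ * _ = _ * _
  rw [← MonoidHom.map_mul, ← MonoidHom.map_mul, pcomm23]

lemma px_comm24 : Commute (toPGL 4 g₂) (toPGL 4 g₄) := by
  show _ * _ = _ * _
  rw [← MonoidHom.map_mul, ← MonoidHom.map_mul, comm24]

lemma px_comm34 : Commute (toPGL 4 g₃) (toPGL 4 g₄) := by
  show _ * _ = _ * _
  rw [← MonoidHom.map_mul, ← MonoidHom.map_mul, comm34]

lemma px_sq1 : toPGL 4 g₁ * toPGL 4 g₁ = 1 := by rw [← MonoidHom.map_mul, g₁_sq, MonoidHom.map_one]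
lemma px_sq2 : toPGL 4 g₂ * toPGL 4 g₂ = 1 := by rw [← MonoidHom.map_mul, g₂_sq, MonoidHom.map_one]
lemma px_sq3 : toPGL 4 g₃ * toPGL 4 g₃ = 1 := by rw [← MonoidHom.map_mul, g₃_sq, MonoidHom.map_one]
lemma px_sq4 : toPGL 4 g₄ * toPGL 4 g₄ = 1 := by rw [← MonoidHom.map_mul, g₄_sq, MonoidHom.map_one]

lemma eP_comm {x y : PGL 4} (h : Commute x y) (b b' : Bool) :
    Commute (eP b x) (eP b' y) := by
  cases b <;> cases b' <;> simp only [eP, if_true, if_false] <;>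
    first
      | exact Commute.one_left _
      | exact Commute.one_right _
      | exact h

lemma eP_mul {x : PGL 4} (hx : x * x = 1) (b b' : Bool) :
    eP b x * eP b' x = eP (xor b b') x := by
  cases b <;> cases b' <;> simp [eP, hx]

lemma fP_mul (a b c d a' b' c' d' : Bool) :
    fP a b c d * fP a' b' c' d'
      = fP (xor a a') (xor b b') (xor c c') (xor d d') := by
  rw [fP_eq, fP_eq, fP_eq]
  set x1 := toPGL 4 g₁ with hx1
  set x2 := toPGL 4 g₂ with hx2
  set x3 := toPGL 4 g₃ with hx3
  set x4 := toPGL 4 g₄ with hx4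
  have H : Commute (eP c x3 * eP d x4) (eP a' x1 * eP b' x2) :=
    Commute.mul_left
      (Commute.mul_right (eP_comm px_comm13.symm c a') (eP_comm px_comm23.symm c b'))
      (Commute.mul_right (eP_comm px_comm14.symm d a') (eP_comm px_comm24.symm d b'))
  calc eP a x1 * eP b x2 * eP c x3 * eP d x4 * (eP a' x1 * eP b' x2 * eP c' x3 * eP d' x4)
      = (eP a x1 * eP b x2) * (eP c x3 * eP d x4) *
          ((eP a' x1 * eP b' x2) * (eP c' x3 * eP d' x4)) := by
        rw [mul_assoc (eP a x1 * eP b x2), mul_assoc (eP a' x1 * eP b' x2)]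
    _ = (eP a x1 * eP b x2) * (eP a' x1 * eP b' x2) *
          ((eP c x3 * eP d x4) * (eP c' x3 * eP d' x4)) :=
        Commute.mul_mul_mul_comm H _ _
    _ = (eP a x1 * eP a' x1) * (eP b x2 * eP b' x2) *
          ((eP c x3 * eP c' x3) * (eP d x4 * eP d' x4)) := by
        rw [Commute.mul_mul_mul_comm (eP_comm px_comm12.symm b a'),
          Commute.mul_mul_mul_comm (eP_comm px_comm34.symm d c')]
    _ = eP (xor a a') x1 * eP (xor b b') x2 * (eP (xor c c') x3 * eP (xor d d') x4) := by
        rw [eP_mul px_sq1, eP_mul px_sq2, eP_mul px_sq3, eP_mul px_sq4]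
    _ = eP (xor a a') x1 * eP (xor b b') x2 * eP (xor c c') x3 * eP (xor d d') x4 :=
        (mul_assoc _ _ _).symm

lemma fP_one : fP false false false false = 1 := by
  simp [fP, Fm, eB]

lemma toPGL_g₁_mem : toPGL 4 g₁ ∈ Γ := by
  unfold Γ; exact Subgroup.subset_closure (Set.mem_insert _ _)
lemma toPGL_g₂_mem : toPGL 4 g₂ ∈ Γ := by
  unfold Γ
  exact Subgroup.subset_closure (Set.mem_insert_iff.mpr (Or.inr (Set.mem_insert _ _)))
lemma toPGL_g₃_mem : toPGL 4 g₃ ∈ Γ := by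
  unfold Γ
  exact Subgroup.subset_closure (Set.mem_insert_iff.mpr (Or.inr
    (Set.mem_insert_iff.mpr (Or.inr (Set.mem_insert _ _)))))
lemma toPGL_g₄_mem : toPGL 4 g₄ ∈ Γ := by
  unfold Γ
  exact Subgroup.subset_closure (Set.mem_insert_iff.mpr (Or.inr
    (Set.mem_insert_iff.mpr (Or.inr (Set.mem_insert_iff.mpr
      (Or.inr (Set.mem_singleton _)))))))

lemma fP_mem (a b c d : Bool) : fP a b c d ∈ Γ := by
  rw [fP_eq]
  have h1 : eP a (toPGL 4 g₁) ∈ Γ := by cases a <;> simp [eP, toPGL_g₁_mem, one_mem]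
  have h2 : eP b (toPGL 4 g₂) ∈ Γ := by cases b <;> simp [eP, toPGL_g₂_mem, one_mem]
  have h3 : eP c (toPGL 4 g₃) ∈ Γ := by cases c <;> simp [eP, toPGL_g₃_mem, one_mem]
  have h4 : eP d (toPGL 4 g₄) ∈ Γ := by cases d <;> simp [eP, toPGL_g₄_mem, one_mem]
  exact mul_mem (mul_mem (mul_mem h1 h2) h3) h4

lemma mem_Gamma {γ : PGL 4} (hγ : γ ∈ Γ) : ∃ a b c d : Bool, γ = fP a b c d := by
  unfold Γ at hγ
  induction hγ using Subgroup.closure_induction with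
  | mem x hx =>
    simp only [Set.mem_insert_iff, Set.mem_singleton_iff] at hx
    rcases hx with hx | hx | hx | hx
    · exact ⟨true, false, false, false, by rw [hx]; simp [fP, Fm, eB]⟩
    · exact ⟨false, true, false, false, by rw [hx]; simp [fP, Fm, eB]⟩
    · exact ⟨false, false, true, false, by rw [hx]; simp [fP, Fm, eB]⟩
    · exact ⟨false, false, false, true, by rw [hx]; simp [fP, Fm, eB]⟩
  | one => exact ⟨false, false, false, false, fP_one.symm⟩
  | mul x y hx hy ihx ihy =>
    obtain ⟨a, b, c, d, hxe⟩ := ihx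
    obtain ⟨a', b', c', d', hye⟩ := ihy
    exact ⟨_, _, _, _, by rw [hxe, hye, fP_mul]⟩
  | inv x hx ih =>
    obtain ⟨a, b, c, d, he⟩ := ih
    refine ⟨a, b, c, d, ?_⟩
    have h2 : fP a b c d * fP a b c d = 1 := by
      rw [fP_mul]; simp [Bool.xor_self, fP_one]
    rw [he, inv_eq_of_mul_eq_one_right h2]

end GroupStructure


section Lines

/-- `labelVal s i α` is `±α^{±1}`, with sign given by `s` and inversion by `i`. -/
noncomputable def labelVal (s i : Bool) (x : ℂ) : ℂ :=
  (cond s (-1 : ℂ) 1) * (cond i x⁻¹ x)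

lemma mem_lineW {α : ℂ} {p : Fin 4 → ℂ} :
    p ∈ lineW α ↔ p 0 + α * p 2 = 0 ∧ p 1 - α⁻¹ * p 3 = 0 := Iff.rfl

lemma mem_lineW' {β : ℂ} {p : Fin 4 → ℂ} :
    p ∈ lineW' β ↔ p 0 + β * p 3 = 0 ∧ p 1 - β⁻¹ * p 2 = 0 := Iff.rfl

lemma lineW_inj {α α' : ℂ} (h : lineW α = lineW α') : α = α' := by
  have hv : (![-α, 0, 1, 0] : Fin 4 → ℂ) ∈ lineW α := by
    rw [mem_lineW]; constructor <;> simp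
  rw [h, mem_lineW] at hv
  obtain ⟨h1, -⟩ := hv
  simp only [Matrix.cons_val_zero] at h1
  have h2 : (![-α, 0, 1, 0] : Fin 4 → ℂ) 2 = 1 := rfl
  rw [h2] at h1
  linear_combination -h1

lemma lineW'_inj {β β' : ℂ} (h : lineW' β = lineW' β') : β = β' := by
  have hv : (![-β, 0, 0, 1] : Fin 4 → ℂ) ∈ lineW' β := by
    rw [mem_lineW']; constructor <;> simp
  rw [h, mem_lineW'] at hv
  obtain ⟨h1, -⟩ := hv
  simp only [Matrix.cons_val_zero] at h1
  have h2 : (![-β, 0, 0, 1] : Fin 4 → ℂ) 3 = 1 := rfl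
  rw [h2] at h1
  linear_combination -h1

lemma apply_g₁ (p : Fin 4 → ℂ) :
    Matrix.toLin' (g₁ : Mat) p = ![p 1, p 0, p 3, p 2] := by
  ext i
  fin_cases i <;>
    simp [cg₁, Matrix.toLin'_apply, Matrix.mulVec, dotProduct, Fin.sum_univ_four,
      Matrix.vecHead, Matrix.vecTail]

lemma apply_g₂ (p : Fin 4 → ℂ) :
    Matrix.toLin' (g₂ : Mat) p = ![p 2, p 3, p 0, p 1] := by
  ext i
  fin_cases i <;>
    simp [cg₂, Matrix.toLin'_apply, Matrix.mulVec, dotProduct, Fin.sum_univ_four,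
      Matrix.vecHead, Matrix.vecTail]

lemma apply_g₃ (p : Fin 4 → ℂ) :
    Matrix.toLin' (g₃ : Mat) p = ![p 0, p 1, -p 2, -p 3] := by
  ext i
  fin_cases i <;>
    simp [cg₃, Matrix.toLin'_apply, Matrix.mulVec, dotProduct, Fin.sum_univ_four,
      Matrix.vecHead, Matrix.vecTail]

lemma apply_g₄ (p : Fin 4 → ℂ) :
    Matrix.toLin' (g₄ : Mat) p = ![p 0, -p 1, p 2, -p 3] := by
  ext i
  fin_cases i <;>
    simp [cg₄, Matrix.toLin'_apply, Matrix.mulVec, dotProduct, Fin.sum_univ_four,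
      Matrix.vecHead, Matrix.vecTail]

lemma vec4_0 (x y z w : ℂ) : (![x, y, z, w] : Fin 4 → ℂ) 0 = x := rfl
lemma vec4_1 (x y z w : ℂ) : (![x, y, z, w] : Fin 4 → ℂ) 1 = y := rfl
lemma vec4_2 (x y z w : ℂ) : (![x, y, z, w] : Fin 4 → ℂ) 2 = z := rfl
lemma vec4_3 (x y z w : ℂ) : (![x, y, z, w] : Fin 4 → ℂ) 3 = w := rfl

lemma g₁_mem_W {α : ℂ} {p : Fin 4 → ℂ} (hp : p ∈ lineW α) :
    Matrix.toLin' (g₁ : Mat) p ∈ lineW (-α⁻¹) := by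
  obtain ⟨h1, h2⟩ := hp
  rw [apply_g₁, mem_lineW]
  simp only [vec4_0, vec4_1, vec4_2, vec4_3, inv_neg, inv_inv]
  constructor
  · linear_combination h2
  · linear_combination h1

lemma g₂_mem_W {α : ℂ} (hα : α ≠ 0) {p : Fin 4 → ℂ} (hp : p ∈ lineW α) :
    Matrix.toLin' (g₂ : Mat) p ∈ lineW α⁻¹ := by
  obtain ⟨h1, h2⟩ := hp
  have hαα : α⁻¹ * α = 1 := inv_mul_cancel₀ hα
  rw [apply_g₂, mem_lineW]
  simp only [vec4_0, vec4_1, vec4_2, vec4_3, inv_inv]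
  constructor
  · linear_combination α⁻¹ * h1 - p 2 * hαα
  · linear_combination -α * h2 - p 3 * hαα

lemma g₃_mem_W {α : ℂ} {p : Fin 4 → ℂ} (hp : p ∈ lineW α) :
    Matrix.toLin' (g₃ : Mat) p ∈ lineW (-α) := by
  obtain ⟨h1, h2⟩ := hp
  rw [apply_g₃, mem_lineW]
  simp only [vec4_0, vec4_1, vec4_2, vec4_3, inv_neg]
  constructor
  · linear_combination h1
  · linear_combination h2

lemma g₄_mem_W {α : ℂ} {p : Fin 4 → ℂ} (hp : p ∈ lineW α) :
    Matrix.toLin' (g₄ : Mat) p ∈ lineW α := by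
  obtain ⟨h1, h2⟩ := hp
  rw [apply_g₄, mem_lineW]
  simp only [vec4_0, vec4_1, vec4_2, vec4_3]
  constructor
  · linear_combination h1
  · linear_combination -h2

lemma g₁_mem_W' {β : ℂ} {p : Fin 4 → ℂ} (hp : p ∈ lineW' β) :
    Matrix.toLin' (g₁ : Mat) p ∈ lineW' (-β⁻¹) := by
  obtain ⟨h1, h2⟩ := hp
  rw [apply_g₁, mem_lineW']
  simp only [vec4_0, vec4_1, vec4_2, vec4_3, inv_neg, inv_inv]
  constructor
  · linear_combination h2
  · linear_combination h1

lemma g₂_mem_W' {β : ℂ} (hβ : β ≠ 0) {p : Fin 4 → ℂ} (hp : p ∈ lineW' β) :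
    Matrix.toLin' (g₂ : Mat) p ∈ lineW' (-β) := by
  obtain ⟨h1, h2⟩ := hp
  have hββ : β⁻¹ * β = 1 := inv_mul_cancel₀ hβ
  rw [apply_g₂, mem_lineW']
  simp only [vec4_0, vec4_1, vec4_2, vec4_3, inv_neg]
  constructor
  · linear_combination -β * h2 - p 2 * hββ
  · linear_combination β⁻¹ * h1 - p 3 * hββ

lemma g₃_mem_W' {β : ℂ} {p : Fin 4 → ℂ} (hp : p ∈ lineW' β) :
    Matrix.toLin' (g₃ : Mat) p ∈ lineW' (-β) := by
  obtain ⟨h1, h2⟩ := hp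
  rw [apply_g₃, mem_lineW']
  simp only [vec4_0, vec4_1, vec4_2, vec4_3, inv_neg]
  constructor
  · linear_combination h1
  · linear_combination h2

lemma g₄_mem_W' {β : ℂ} {p : Fin 4 → ℂ} (hp : p ∈ lineW' β) :
    Matrix.toLin' (g₄ : Mat) p ∈ lineW' (-β) := by
  obtain ⟨h1, h2⟩ := hp
  rw [apply_g₄, mem_lineW']
  simp only [vec4_0, vec4_1, vec4_2, vec4_3, inv_neg]
  constructor
  · linear_combination h1
  · linear_combination -h2

lemma g_msq₁ : (g₁ : Mat) * (g₁ : Mat) = 1 := by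
  have := congrArg Units.val g₁_sq; simpa using this
lemma g_msq₂ : (g₂ : Mat) * (g₂ : Mat) = 1 := by
  have := congrArg Units.val g₂_sq; simpa using this
lemma g_msq₃ : (g₃ : Mat) * (g₃ : Mat) = 1 := by
  have := congrArg Units.val g₃_sq; simpa using this
lemma g_msq₄ : (g₄ : Mat) * (g₄ : Mat) = 1 := by
  have := congrArg Units.val g₄_sq; simpa using this

lemma map_eq_of {M N : Mat} (hNM : N * M = 1) {L L' : Submodule ℂ (Fin 4 → ℂ)}
    (h1 : ∀ p ∈ L, Matrix.toLin' M p ∈ L') (h2 : ∀ q ∈ L', Matrix.toLin' N q ∈ L) :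
    Submodule.map (Matrix.toLin' M) L = L' := by
  apply le_antisymm
  · rintro x ⟨p, hp, rfl⟩
    exact h1 p hp
  · intro q hq
    refine ⟨Matrix.toLin' N q, h2 q hq, ?_⟩
    have hMN : M * N = 1 := mul_eq_one_comm.mp hNM
    rw [← LinearMap.comp_apply, ← Matrix.toLin'_mul, hMN, Matrix.toLin'_one, LinearMap.id_apply]

lemma map_g₁_W (α : ℂ) :
    Submodule.map (Matrix.toLin' (g₁ : Mat)) (lineW α) = lineW (-α⁻¹) := by
  refine map_eq_of g_msq₁ (fun p hp => g₁_mem_W hp) (fun q hq => ?_)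
  have := g₁_mem_W hq
  rwa [inv_neg, inv_inv, neg_neg] at this

lemma map_g₂_W (α : ℂ) (hα : α ≠ 0) :
    Submodule.map (Matrix.toLin' (g₂ : Mat)) (lineW α) = lineW α⁻¹ := by
  refine map_eq_of g_msq₂ (fun p hp => g₂_mem_W hα hp) (fun q hq => ?_)
  have := g₂_mem_W (inv_ne_zero hα) hq
  rwa [inv_inv] at this

lemma map_g₃_W (α : ℂ) :
    Submodule.map (Matrix.toLin' (g₃ : Mat)) (lineW α) = lineW (-α) := by
  refine map_eq_of g_msq₃ (fun p hp => g₃_mem_W hp) (fun q hq => ?_)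
  have := g₃_mem_W hq
  rwa [neg_neg] at this

lemma map_g₄_W (α : ℂ) :
    Submodule.map (Matrix.toLin' (g₄ : Mat)) (lineW α) = lineW α :=
  map_eq_of g_msq₄ (fun p hp => g₄_mem_W hp) (fun q hq => g₄_mem_W hq)

lemma map_g₁_W' (β : ℂ) :
    Submodule.map (Matrix.toLin' (g₁ : Mat)) (lineW' β) = lineW' (-β⁻¹) := by
  refine map_eq_of g_msq₁ (fun p hp => g₁_mem_W' hp) (fun q hq => ?_)
  have := g₁_mem_W' hq
  rwa [inv_neg, inv_inv, neg_neg] at this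

lemma map_g₂_W' (β : ℂ) (hβ : β ≠ 0) :
    Submodule.map (Matrix.toLin' (g₂ : Mat)) (lineW' β) = lineW' (-β) := by
  refine map_eq_of g_msq₂ (fun p hp => g₂_mem_W' hβ hp) (fun q hq => ?_)
  have := g₂_mem_W' (neg_ne_zero.mpr hβ) hq
  rwa [neg_neg] at this

lemma map_g₃_W' (β : ℂ) :
    Submodule.map (Matrix.toLin' (g₃ : Mat)) (lineW' β) = lineW' (-β) := by
  refine map_eq_of g_msq₃ (fun p hp => g₃_mem_W' hp) (fun q hq => ?_)
  have := g₃_mem_W' hq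
  rwa [neg_neg] at this

lemma map_g₄_W' (β : ℂ) :
    Submodule.map (Matrix.toLin' (g₄ : Mat)) (lineW' β) = lineW' (-β) := by
  refine map_eq_of g_msq₄ (fun p hp => g₄_mem_W' hp) (fun q hq => ?_)
  have := g₄_mem_W' hq
  rwa [neg_neg] at this

end Lines


section FmMaps

lemma Fm_val (a b c d : Bool) :
    ((Fm a b c d : GL (Fin 4) ℂ) : Mat)
      = (eB a g₁ : Mat) * ((eB b g₂ : Mat) * ((eB c g₃ : Mat) * (eB d g₄ : Mat))) := by
  simp [Fm, Units.val_mul, mul_assoc]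

lemma map_eB₄_W (d : Bool) (α : ℂ) :
    Submodule.map (Matrix.toLin' (eB d g₄ : Mat)) (lineW α) = lineW α := by
  cases d
  · simp [eB, Matrix.toLin'_one, Submodule.map_id]
  · simpa [eB] using map_g₄_W α

lemma map_eB₃_W (c : Bool) (α : ℂ) :
    Submodule.map (Matrix.toLin' (eB c g₃ : Mat)) (lineW α) = lineW (cond c (-α) α) := by
  cases c
  · simp [eB, Matrix.toLin'_one, Submodule.map_id]
  · simpa [eB] using map_g₃_W α

lemma map_eB₂_W (b : Bool) (α : ℂ) (hα : α ≠ 0) :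
    Submodule.map (Matrix.toLin' (eB b g₂ : Mat)) (lineW α) = lineW (cond b α⁻¹ α) := by
  cases b
  · simp [eB, Matrix.toLin'_one, Submodule.map_id]
  · simpa [eB] using map_g₂_W α hα

lemma map_eB₁_W (a : Bool) (α : ℂ) :
    Submodule.map (Matrix.toLin' (eB a g₁ : Mat)) (lineW α) = lineW (cond a (-α⁻¹) α) := by
  cases a
  · simp [eB, Matrix.toLin'_one, Submodule.map_id]
  · simpa [eB] using map_g₁_W α

lemma map_Fm_W (a b c d : Bool) (α : ℂ) (hα : α ≠ 0) :
    Submodule.map (Matrix.toLin' ((Fm a b c d : GL (Fin 4) ℂ) : Mat)) (lineW α)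
      = lineW (labelVal (xor a c) (xor a b) α) := by
  have hc : cond c (-α) α ≠ 0 := by cases c <;> simp [hα]
  rw [Fm_val, Matrix.toLin'_mul, Matrix.toLin'_mul, Matrix.toLin'_mul,
    Submodule.map_comp, Submodule.map_comp, Submodule.map_comp,
    map_eB₄_W, map_eB₃_W, map_eB₂_W b _ hc, map_eB₁_W]
  congr 1
  cases a <;> cases b <;> cases c <;>
    simp [labelVal, inv_neg, inv_inv, neg_neg]

lemma map_eB₄_W' (d : Bool) (β : ℂ) :
    Submodule.map (Matrix.toLin' (eB d g₄ : Mat)) (lineW' β) = lineW' (cond d (-β) β) := by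
  cases d
  · simp [eB, Matrix.toLin'_one, Submodule.map_id]
  · simpa [eB] using map_g₄_W' β

lemma map_eB₃_W' (c : Bool) (β : ℂ) :
    Submodule.map (Matrix.toLin' (eB c g₃ : Mat)) (lineW' β) = lineW' (cond c (-β) β) := by
  cases c
  · simp [eB, Matrix.toLin'_one, Submodule.map_id]
  · simpa [eB] using map_g₃_W' β

lemma map_eB₂_W' (b : Bool) (β : ℂ) (hβ : β ≠ 0) :
    Submodule.map (Matrix.toLin' (eB b g₂ : Mat)) (lineW' β) = lineW' (cond b (-β) β) := by
  cases b
  · simp [eB, Matrix.toLin'_one, Submodule.map_id]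
  · simpa [eB] using map_g₂_W' β hβ

lemma map_eB₁_W' (a : Bool) (β : ℂ) :
    Submodule.map (Matrix.toLin' (eB a g₁ : Mat)) (lineW' β) = lineW' (cond a (-β⁻¹) β) := by
  cases a
  · simp [eB, Matrix.toLin'_one, Submodule.map_id]
  · simpa [eB] using map_g₁_W' β

lemma map_Fm_W' (a b c d : Bool) (β : ℂ) (hβ : β ≠ 0) :
    Submodule.map (Matrix.toLin' ((Fm a b c d : GL (Fin 4) ℂ) : Mat)) (lineW' β)
      = lineW' (labelVal (xor (xor a b) (xor c d)) a β) := by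
  have hd : cond d (-β) β ≠ 0 := by cases d <;> simp [hβ]
  have hcd : cond c (-(cond d (-β) β)) (cond d (-β) β) ≠ 0 := by
    cases c <;> simp [hd]
  rw [Fm_val, Matrix.toLin'_mul, Matrix.toLin'_mul, Matrix.toLin'_mul,
    Submodule.map_comp, Submodule.map_comp, Submodule.map_comp,
    map_eB₄_W', map_eB₃_W', map_eB₂_W' b _ hcd, map_eB₁_W']
  congr 1
  cases a <;> cases b <;> cases c <;> cases d <;>
    simp [labelVal, inv_neg, inv_inv, neg_neg]

end FmMaps


section Rep

lemma map_scalar (c : ℂˣ) (L : Submodule ℂ (Fin 4 → ℂ)) :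
    Submodule.map (Matrix.toLin' (((c : ℂ) • 1 : Mat))) L = L := by
  have ht : Matrix.toLin' (((c : ℂ) • 1 : Mat)) = (c : ℂ) • (Matrix.toLin' (1 : Mat)) :=
    map_smul _ _ _
  rw [ht, Matrix.toLin'_one]
  apply le_antisymm
  · rintro x ⟨p, hp, rfl⟩
    simpa using L.smul_mem (c : ℂ) hp
  · intro x hx
    refine ⟨(c : ℂ)⁻¹ • x, L.smul_mem _ hx, ?_⟩
    simp [smul_smul, mul_inv_cancel₀ (Units.ne_zero c)]

lemma mapsLine_rep {γ : PGL 4} {L L' : Submodule ℂ (Fin 4 → ℂ)}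
    (h : mapsLine γ L L') {g : GL (Fin 4) ℂ} (hg : toPGL 4 g = γ) :
    Submodule.map (Matrix.toLin' ((g : GL (Fin 4) ℂ) : Mat)) L = L' := by
  obtain ⟨g', hg', hmap⟩ := h
  have hq : toPGL 4 g' = toPGL 4 g := hg'.trans hg.symm
  obtain ⟨z, hz, hzz⟩ := (QuotientGroup.mk'_eq_mk' (scalarUnits 4)).mp hq
  obtain ⟨c, rfl⟩ := hz
  have hval : ((g' * Units.map (algebraMap ℂ Mat).toMonoidHom c : GL (Fin 4) ℂ) : Mat)
      = (g' : Mat) * ((c : ℂ) • (1 : Mat)) := by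
    rw [Units.val_mul]
    congr 1
    simp [Units.coe_map, Algebra.algebraMap_eq_smul_one]
  rw [← hzz, hval, Matrix.toLin'_mul, Submodule.map_comp, map_scalar, hmap]

end Rep

section Roots

lemma root_facts {A D α : ℂ} (hA : A ≠ 0) (hD : D ^ 2 ≠ 4 * A ^ 2)
    (h : A * α ^ 4 + D * α ^ 2 + A = 0) :
    α ≠ 0 ∧ α ^ 2 ≠ 1 ∧ α ^ 2 ≠ -1 := by
  refine ⟨?_, ?_, ?_⟩
  · rintro rfl
    simp at h
    exact hA h
  · intro hsq
    apply hD
    have hDA : D = -(2 * A) := by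
      linear_combination h - (A * α ^ 2 + A + D) * hsq
    linear_combination (D - 2 * A) * hDA
  · intro hsq
    apply hD
    have hDA : D = 2 * A := by
      linear_combination -h + (A * α ^ 2 - A + D) * hsq
    linear_combination (D + 2 * A) * hDA

lemma labelVal_root {A D α : ℂ} (hα : α ≠ 0)
    (h : A * α ^ 4 + D * α ^ 2 + A = 0) (s i : Bool) :
    A * (labelVal s i α) ^ 4 + D * (labelVal s i α) ^ 2 + A = 0 := by
  cases s <;> cases i <;>
    simp only [labelVal, Bool.cond_true, Bool.cond_false, one_mul, neg_one_mul]
  · linear_combination h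
  · field_simp
    linear_combination h
  · linear_combination h
  · field_simp
    linear_combination h

lemma labelVal_ne_zero {α : ℂ} (hα : α ≠ 0) (s i : Bool) : labelVal s i α ≠ 0 := by
  cases s <;> cases i <;> simp [labelVal, hα]

lemma labelVal_inj {α : ℂ} (hα : α ≠ 0) (h1 : α ^ 2 ≠ 1) (h2 : α ^ 2 ≠ -1)
    {s i s' i' : Bool} (h : labelVal s i α = labelVal s' i' α) : s = s' ∧ i = i' := by
  have hia : α⁻¹ ≠ 0 := inv_ne_zero hα
  have hne_aa : α ≠ -α := fun hh => hα (by linear_combination hh / 2)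
  have hne_ai : α ≠ α⁻¹ := fun hh => h1 (by
    rw [sq]; nth_rewrite 1 [hh]; exact inv_mul_cancel₀ hα)
  have hne_ani : α ≠ -α⁻¹ := fun hh => h2 (by
    rw [sq]; nth_rewrite 1 [hh]; rw [neg_mul, inv_mul_cancel₀ hα])
  have hne_nai : -α ≠ α⁻¹ := fun hh => hne_ani (neg_eq_iff_eq_neg.mp hh)
  have hne_ii : α⁻¹ ≠ -α⁻¹ := fun hh => hia (by linear_combination hh / 2)
  have s1 := hne_aa.symm
  have s2 := hne_ai.symm
  have s3 := hne_ani.symm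
  have s4 := hne_nai.symm
  have s5 := hne_ii.symm
  have hne_nia : -α⁻¹ ≠ α := s3
  cases s <;> cases s' <;> cases i <;> cases i' <;>
    simp_all [labelVal]

lemma root_rel {A D α₁ α₂ : ℂ} (hA : A ≠ 0) (hα₁ : α₁ ≠ 0)
    (h₁ : A * α₁ ^ 4 + D * α₁ ^ 2 + A = 0) (h₂ : A * α₂ ^ 4 + D * α₂ ^ 2 + A = 0) :
    ∃ s i : Bool, α₂ = labelVal s i α₁ := by
  have kk : A * ((α₂ - α₁) * (α₂ + α₁) * (α₁ * α₂ - 1) * (α₁ * α₂ + 1)) = 0 := by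
    linear_combination α₁ ^ 2 * h₂ - α₂ ^ 2 * h₁
  have key : (α₂ - α₁) * (α₂ + α₁) * (α₁ * α₂ - 1) * (α₁ * α₂ + 1) = 0 :=
    (mul_eq_zero.mp kk).resolve_left hA
  rcases mul_eq_zero.mp key with key' | hc4
  · rcases mul_eq_zero.mp key' with key'' | hc3
    · rcases mul_eq_zero.mp key'' with hc1 | hc2
      · refine ⟨false, false, ?_⟩
        simp only [labelVal, Bool.cond_false, one_mul]
        linear_combination hc1
      · refine ⟨true, false, ?_⟩
        simp only [labelVal, Bool.cond_true, Bool.cond_false, neg_one_mul]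
        linear_combination hc2
    · refine ⟨false, true, ?_⟩
      simp only [labelVal, Bool.cond_false, Bool.cond_true, one_mul]
      exact eq_inv_of_mul_eq_one_left (by linear_combination hc3)
  · refine ⟨true, true, ?_⟩
    simp only [labelVal, Bool.cond_true, neg_one_mul]
    have h5 : -α₂ = α₁⁻¹ := eq_inv_of_mul_eq_one_left (by linear_combination -hc4)
    linear_combination -h5

end Roots

section BoolDecode

lemma bdec1 : ∀ x y : Bool, xor x (xor y x) = y := by decide
lemma bdec2 : ∀ x y : Bool, xor x (xor x y) = y := by decide
lemma bdec3 : ∀ x y : Bool, xor (xor x y) x = y := by decide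

end BoolDecode

end GammaAux

open GammaAux


/-- `Γ` preserves the two rulings `𝒜` and `ℬ` of the eight lines, and acts simply
transitively on `𝒜 × ℬ`: given `L₁, L₂ ∈ 𝒜` and `M₁, M₂ ∈ ℬ` there is a unique
`γ ∈ Γ` with `γ(L₁) = L₂` and `γ(M₁) = M₂`. -/
theorem gamma_simply_transitive (A B C D E : ℂ) (hA : A ≠ 0)
    (h : A * B - 2 * A * C + D * E = 0)
    (hD : D ^ 2 ≠ 4 * A ^ 2) (hE : E ^ 2 ≠ 4 * A ^ 2) :
    (∀ γ ∈ Γ, ∀ L ∈ linesA A D, ∃ L' ∈ linesA A D, mapsLine γ L L') ∧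
      (∀ γ ∈ Γ, ∀ M ∈ linesB A E, ∃ M' ∈ linesB A E, mapsLine γ M M') ∧
      ∀ L₁ ∈ linesA A D, ∀ L₂ ∈ linesA A D, ∀ M₁ ∈ linesB A E, ∀ M₂ ∈ linesB A E,
        ∃! γ : PGL 4, γ ∈ Γ ∧ mapsLine γ L₁ L₂ ∧ mapsLine γ M₁ M₂ := by
  refine ⟨?_, ?_, ?_⟩
  · intro γ hγ L hL
    obtain ⟨a, b, c, d, hγe⟩ := mem_Gamma hγ
    obtain ⟨α, hroot, rfl⟩ := hL
    obtain ⟨hα0, -, -⟩ := root_facts hA hD hroot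
    refine ⟨lineW (labelVal (xor a c) (xor a b) α),
      ⟨labelVal (xor a c) (xor a b) α, labelVal_root hα0 hroot _ _, rfl⟩, ?_⟩
    exact ⟨Fm a b c d, hγe.symm, map_Fm_W a b c d α hα0⟩
  · intro γ hγ M hM
    obtain ⟨a, b, c, d, hγe⟩ := mem_Gamma hγ
    obtain ⟨β, hroot, rfl⟩ := hM
    obtain ⟨hβ0, -, -⟩ := root_facts hA hE hroot
    refine ⟨lineW' (labelVal (xor (xor a b) (xor c d)) a β),
      ⟨labelVal (xor (xor a b) (xor c d)) a β, labelVal_root hβ0 hroot _ _, rfl⟩, ?_⟩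
    exact ⟨Fm a b c d, hγe.symm, map_Fm_W' a b c d β hβ0⟩
  · intro L₁ hL₁ L₂ hL₂ M₁ hM₁ M₂ hM₂
    obtain ⟨α₁, hrA1, rfl⟩ := hL₁
    obtain ⟨α₂, hrA2, rfl⟩ := hL₂
    obtain ⟨β₁, hrB1, rfl⟩ := hM₁
    obtain ⟨β₂, hrB2, rfl⟩ := hM₂
    obtain ⟨hα₁0, hα₁sq1, hα₁sq2⟩ := root_facts hA hD hrA1
    obtain ⟨hβ₁0, hβ₁sq1, hβ₁sq2⟩ := root_facts hA hE hrB1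
    obtain ⟨sa, ia, hEa⟩ := root_rel hA hα₁0 hrA1 hrA2
    obtain ⟨sb, ib, hEb⟩ := root_rel hA hβ₁0 hrB1 hrB2
    refine ⟨fP ib (xor ia ib) (xor sa ib) (xor (xor sa ib) (xor ia sb)),
      ⟨fP_mem _ _ _ _, ?_, ?_⟩, ?_⟩
    · refine ⟨Fm ib (xor ia ib) (xor sa ib) (xor (xor sa ib) (xor ia sb)), rfl, ?_⟩
      rw [map_Fm_W _ _ _ _ α₁ hα₁0]
      simp only [bdec1]
      rw [← hEa]
    · refine ⟨Fm ib (xor ia ib) (xor sa ib) (xor (xor sa ib) (xor ia sb)), rfl, ?_⟩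
      rw [map_Fm_W' _ _ _ _ β₁ hβ₁0]
      simp only [bdec1, bdec2]
      rw [← hEb]
    · rintro γ ⟨hγ, hmA, hmB⟩
      obtain ⟨a', b', c', d', hγe⟩ := mem_Gamma hγ
      have hrep : toPGL 4 (Fm a' b' c' d') = γ := hγe.symm
      have h1 := mapsLine_rep hmA hrep
      rw [map_Fm_W a' b' c' d' α₁ hα₁0] at h1
      have e1 : labelVal (xor a' c') (xor a' b') α₁ = labelVal sa ia α₁ :=
        (lineW_inj h1).trans hEa
      obtain ⟨esa, eia⟩ := labelVal_inj hα₁0 hα₁sq1 hα₁sq2 e1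
      have h2 := mapsLine_rep hmB hrep
      rw [map_Fm_W' a' b' c' d' β₁ hβ₁0] at h2
      have e2 : labelVal (xor (xor a' b') (xor c' d')) a' β₁ = labelVal sb ib β₁ :=
        (lineW'_inj h2).trans hEb
      obtain ⟨esb, eib⟩ := labelVal_inj hβ₁0 hβ₁sq1 hβ₁sq2 e2
      rw [hγe, ← esa, ← eia, ← esb, ← eib]
      simp only [bdec3, bdec2]
end
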